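/- In any state propagated from a flat clusteron of N violinists initially occupying rooms 0 through N−1, no violinist ever occupies a room to the left of room −(N−1) or to the right of room 2N−2; that is, under the chip-pushing interpretation, each violinist moves at most N−1 rooms away from its starting room. -/

import Mathlib

/-- A two-sided dispersion move on single-occupancy states (finite sets of occupied rooms):
violinists in adjacent rooms `i` and `i+1` move to the nearest unoccupied rooms
`i - ℓ` (on the left) and `i + 1 + r` (on the right). -/
def FMove (S T : Finset ℤ) : Prop :=
  ∃ i ℓ r : ℤ, 1 ≤ ℓ ∧ 1 ≤ r ∧ i ∈ S ∧ i + 1 ∈ S ∧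
    (∀ j : ℤ, 1 ≤ j → j < ℓ → i - j ∈ S) ∧ i - ℓ ∉ S ∧
    (∀ j : ℤ, 2 ≤ j → j ≤ r → i + j ∈ S) ∧ i + 1 + r ∉ S ∧
    T = insert (i - ℓ) (insert (i + 1 + r) ((S.erase i).erase (i + 1)))

/-- Reachability by a sequence of moves. -/
def FReaches : Finset ℤ → Finset ℤ → Prop := Relation.ReflTransGen FMove

/-- A final state: no move is possible. -/
def FIsFinal (S : Finset ℤ) : Prop := ¬ ∃ T, FMove S T

/-- The centroid of a state: the average of the occupied room numbers. -/
noncomputable def centroidF (S : Finset ℤ) : ℚ := (∑ x ∈ S, (x : ℚ)) / S.card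

/-- The shadow `F_{N,k}` with leftmost violinist at `p`: occupied rooms
`p, p+2, ..., p+2(k-1), p+2k+1, p+2k+3, ..., p+2N-1`. -/
def shadow (N k : ℕ) (p : ℤ) : Finset ℤ :=
  (Finset.range N).image fun j => if j < k then p + 2 * j else p + 2 * j + 1



noncomputable def cnt (S : Finset ℤ) (u v : ℤ) : ℤ := ((Finset.Icc u v).filter (fun x => x ∈ S)).card

lemma cnt_nonneg (S : Finset ℤ) (u v : ℤ) : 0 ≤ cnt S u v := Int.natCast_nonneg _

lemma cnt_le_card (S : Finset ℤ) (u v : ℤ) : cnt S u v ≤ (S.card : ℤ) := by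
  have h : (Finset.Icc u v).filter (fun x => x ∈ S) ⊆ S := fun x hx => (Finset.mem_filter.mp hx).2
  unfold cnt
  exact_mod_cast Finset.card_le_card h

lemma cnt_split' (S : Finset ℤ) {u w w' v : ℤ} (h1 : u ≤ w') (h2 : w ≤ v) (h3 : w' = w + 1) :
    cnt S u v = cnt S u w + cnt S w' v := by
  subst h3
  have hset : Finset.Icc u v = Finset.Icc u w ∪ Finset.Icc (w+1) v := by
    ext x; simp only [Finset.mem_Icc, Finset.mem_union]; omega
  have hdisj : Disjoint ((Finset.Icc u w).filter (fun x => x ∈ S))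
      ((Finset.Icc (w+1) v).filter (fun x => x ∈ S)) := by
    apply Finset.disjoint_filter_filter
    rw [Finset.disjoint_left]
    intro a ha hb
    simp only [Finset.mem_Icc] at ha hb; omega
  unfold cnt
  rw [hset, Finset.filter_union, Finset.card_union_of_disjoint hdisj]
  push_cast; ring

lemma cnt_full {S : Finset ℤ} {u v : ℤ} (h : ∀ x, u ≤ x → x ≤ v → x ∈ S) (huv : u ≤ v) :
    cnt S u v = v - u + 1 := by
  unfold cnt
  rw [Finset.filter_true_of_mem (fun x hx => h x (Finset.mem_Icc.mp hx).1 (Finset.mem_Icc.mp hx).2)]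
  rw [Int.card_Icc]
  omega

lemma cnt_zero {S : Finset ℤ} {u v : ℤ} (h : ∀ x, u ≤ x → x ≤ v → x ∉ S) : cnt S u v = 0 := by
  unfold cnt
  rw [Finset.filter_false_of_mem (fun x hx => h x (Finset.mem_Icc.mp hx).1 (Finset.mem_Icc.mp hx).2)]
  simp

lemma cnt_congr {S T : Finset ℤ} {u v : ℤ} (h : ∀ x, u ≤ x → x ≤ v → (x ∈ S ↔ x ∈ T)) :
    cnt S u v = cnt T u v := by
  unfold cnt
  have : (Finset.Icc u v).filter (fun x => x ∈ S) = (Finset.Icc u v).filter (fun x => x ∈ T) := by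
    apply Finset.filter_congr
    intro x hx
    have hx' := Finset.mem_Icc.mp hx
    simpa using h x hx'.1 hx'.2
  rw [this]

structure FInv (N : ℕ) (S : Finset ℤ) : Prop where
  hcard : S.card = N
  exLow : ∃ x ∈ S, x ≤ 0
  exHigh : ∃ x ∈ S, (N:ℤ) - 1 ≤ x
  i1 : ∀ u ∈ S, ∀ v ∈ S, u ≤ v → v - u + 1 ≤ 2 * cnt S u v
  i2 : (∀ x ∈ S, 0 ≤ x) → ∀ v ∈ S, v + 2 ≤ 2 * cnt S 0 v
  i3 : (∀ x ∈ S, x ≤ (N:ℤ) - 1) → ∀ u ∈ S, (N:ℤ) + 1 - u ≤ 2 * cnt S u ((N:ℤ) - 1)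

lemma finv_init (N : ℕ) (hN : 1 ≤ N) : FInv N (Finset.Icc (0 : ℤ) ((N:ℤ) - 1)) := by
  have hmem : ∀ x : ℤ, x ∈ Finset.Icc (0:ℤ) ((N:ℤ)-1) ↔ 0 ≤ x ∧ x ≤ (N:ℤ)-1 := by
    intro x; exact Finset.mem_Icc
  refine ⟨?_, ⟨0, ?_, le_refl 0⟩, ⟨(N:ℤ)-1, ?_, le_refl _⟩, ?_, ?_, ?_⟩
  · rw [Int.card_Icc]; omega
  · rw [hmem]; omega
  · rw [hmem]; omega
  · intro u hu v hv huv
    rw [hmem] at hu hv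
    rw [cnt_full (fun x h1 h2 => (hmem x).mpr ⟨by omega, by omega⟩) huv]
    omega
  · intro _ v hv
    rw [hmem] at hv
    rw [cnt_full (fun x h1 h2 => (hmem x).mpr ⟨by omega, by omega⟩) (by omega)]
    omega
  · intro _ u hu
    rw [hmem] at hu
    rw [cnt_full (fun x h1 h2 => (hmem x).mpr ⟨by omega, by omega⟩) (by omega)]
    omega

lemma finv_move {N : ℕ} {S T : Finset ℤ} (hm : FMove S T) (hs : FInv N S) : FInv N T := by
  obtain ⟨i, l, r, hl, hr, hiS, hi1S, hLrun, hdS, hRrun, heS, hTdef⟩ := hm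
  set d := i - l with hd_def
  set e := i + 1 + r with he_def
  have hdi : d ≤ i - 1 := by omega
  have hie : i + 2 ≤ e := by omega
  have run : ∀ x : ℤ, d + 1 ≤ x → x ≤ e - 1 → x ∈ S := by
    intro x h1 h2
    rcases lt_trichotomy x i with h | h | h
    · have hx := hLrun (i - x) (by omega) (by omega)
      have : i - (i - x) = x := by ring
      rwa [this] at hx
    · rwa [h]
    · rcases eq_or_lt_of_le (by omega : i + 1 ≤ x) with h' | h'
      · rw [← h']; exact hi1S
      · have hx := hRrun (x - i) (by omega) (by omega)
        have : i + (x - i) = x := by ring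
        rwa [this] at hx
  have memT : ∀ x : ℤ, x ∈ T ↔ (x = d ∨ x = e ∨ (x ∈ S ∧ x ≠ i ∧ x ≠ i + 1)) := by
    intro x
    rw [hTdef]
    simp only [Finset.mem_insert, Finset.mem_erase]
    tauto
  have hiT : i ∉ T := by
    rw [memT]; rintro (h | h | ⟨-, h, -⟩) <;> omega
  have hi1T : i + 1 ∉ T := by
    rw [memT]; rintro (h | h | ⟨-, -, h⟩) <;> omega
  have hTfull : ∀ x, d ≤ x → x ≤ e → x ≠ i → x ≠ i + 1 → x ∈ T := by
    intro x h1 h2 h3 h4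
    rw [memT]
    by_cases hxd : x = d
    · exact Or.inl hxd
    by_cases hxe : x = e
    · exact Or.inr (Or.inl hxe)
    exact Or.inr (Or.inr ⟨run x (by omega) (by omega), h3, h4⟩)
  have hagree : ∀ x : ℤ, (x < d ∨ e < x) → (x ∈ T ↔ x ∈ S) := by
    intro x hx
    rw [memT]
    constructor
    · rintro (h | h | ⟨h, -, -⟩) <;> first | omega | exact h
    · intro hxS
      exact Or.inr (Or.inr ⟨hxS, by omega, by omega⟩)
  have hdT : d ∈ T := (memT d).mpr (Or.inl rfl)
  have heT : e ∈ T := (memT e).mpr (Or.inr (Or.inl rfl))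
  -- count facts
  have cTL : ∀ u v : ℤ, d ≤ u → u ≤ v → v ≤ i - 1 → cnt T u v = v - u + 1 := by
    intro u v h1 h2 h3
    exact cnt_full (fun x hx1 hx2 => hTfull x (by omega) (by omega) (by omega) (by omega)) h2
  have cTR : ∀ u v : ℤ, i + 2 ≤ u → u ≤ v → v ≤ e → cnt T u v = v - u + 1 := by
    intro u v h1 h2 h3
    exact cnt_full (fun x hx1 hx2 => hTfull x (by omega) (by omega) (by omega) (by omega)) h2
  have cTmid : cnt T i (i+1) = 0 := by
    apply cnt_zero
    intro x h1 h2
    have : x = i ∨ x = i + 1 := by omega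
    rcases this with rfl | rfl
    · exact hiT
    · exact hi1T
  have cTwin : ∀ u v : ℤ, d ≤ u → u ≤ i - 1 → i + 2 ≤ v → v ≤ e → cnt T u v = v - u - 1 := by
    intro u v h1 h2 h3 h4
    rw [cnt_split' T (w := i - 1) (w' := i) (by omega) (by omega) (by ring)]
    rw [cnt_split' T (u := i) (w := i + 1) (w' := i + 2) (by omega) (by omega) (by ring)]
    rw [cTL u (i-1) h1 h2 le_rfl, cTR (i+2) v le_rfl h3 h4, cTmid]
    ring
  have cSd : cnt S d d = 0 := by
    apply cnt_zero; intro x h1 h2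
    have : x = d := by omega
    rwa [this]
  have cSe : cnt S e e = 0 := by
    apply cnt_zero; intro x h1 h2
    have : x = e := by omega
    rwa [this]
  have cSde : cnt S d e = e - d - 1 := by
    rw [cnt_split' S (w := d) (w' := d + 1) (by omega) (by omega) rfl]
    rw [cnt_split' S (u := d + 1) (w := e - 1) (w' := e) (by omega) (by omega) (by ring)]
    rw [cSd, cSe, cnt_full (fun x h1 h2 => run x h1 h2) (by omega)]
    ring
  have cTde : cnt T d e = e - d - 1 := cTwin d e le_rfl hdi hie le_rfl
  have cntTS_outer : ∀ u v : ℤ, u ≤ d - 1 → e + 1 ≤ v → cnt T u v = cnt S u v := by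
    intro u v h1 h2
    rw [cnt_split' T (w := d - 1) (w' := d) (by omega) (by omega) (by ring)]
    rw [cnt_split' T (u := d) (w := e) (w' := e + 1) (by omega) (by omega) rfl]
    rw [cnt_split' S (w := d - 1) (w' := d) (by omega) (by omega) (by ring)]
    rw [cnt_split' S (u := d) (w := e) (w' := e + 1) (by omega) (by omega) rfl]
    rw [cTde, cSde]
    rw [cnt_congr (S := T) (T := S) (fun x hx1 hx2 => hagree x (by omega))]
    rw [cnt_congr (S := T) (T := S) (u := e + 1) (v := v) (fun x hx1 hx2 => hagree x (by omega))]
  have hd1S : d + 1 ∈ S := run _ le_rfl (by omega)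
  have he1S : e - 1 ∈ S := run _ (by omega) le_rfl
  have cS_d : ∀ u : ℤ, u ≤ d - 1 → cnt S u (d+1) = cnt S u (d-1) + 1 := by
    intro u hu
    rw [cnt_split' S (w := d - 1) (w' := d) (by omega) (by omega) (by ring)]
    rw [cnt_split' S (u := d) (w := d) (w' := d + 1) (by omega) (by omega) rfl]
    rw [cSd, cnt_full (fun x h1 h2 => by rwa [show x = d + 1 by omega]) le_rfl]
    ring
  have cS_e : ∀ v : ℤ, e + 1 ≤ v → cnt S (e-1) v = cnt S (e+1) v + 1 := by
    intro v hv
    rw [cnt_split' S (u := e - 1) (w := e - 1) (w' := e) (by omega) (by omega) (by ring)]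
    rw [cnt_split' S (u := e) (w := e) (w' := e + 1) (by omega) (by omega) rfl]
    rw [cSe, cnt_full (fun x h1 h2 => by rwa [show x = e - 1 by omega]) le_rfl]
    ring
  have haux1 : ∀ u, u ∈ S → u ≤ d - 1 → d - u ≤ 2 * cnt S u (d-1) := by
    intro u huS hu
    have h := hs.i1 u huS (d+1) hd1S (by omega)
    rw [cS_d u hu] at h
    linarith
  have haux2 : ∀ v, v ∈ S → e + 1 ≤ v → v - e ≤ 2 * cnt S (e+1) v := by
    intro v hvS hv
    have h := hs.i1 (e-1) he1S v hvS (by omega)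
    rw [cS_e v hv] at h
    linarith
  have classify : ∀ x ∈ T, (x ≤ d - 1 ∧ x ∈ S) ∨ (d ≤ x ∧ x ≤ i - 1) ∨ (i + 2 ≤ x ∧ x ≤ e)
      ∨ (e + 1 ≤ x ∧ x ∈ S) := by
    intro x hx
    rw [memT] at hx
    rcases hx with rfl | rfl | ⟨hxS, hx1, hx2⟩
    · right; left; omega
    · right; right; left; omega
    · rcases (by omega : x ≤ d - 1 ∨ (d ≤ x ∧ x ≤ i - 1) ∨ (i + 2 ≤ x ∧ x ≤ e) ∨ e + 1 ≤ x) with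
        h | h | h | h
      · exact Or.inl ⟨h, hxS⟩
      · exact Or.inr (Or.inl h)
      · exact Or.inr (Or.inr (Or.inl h))
      · exact Or.inr (Or.inr (Or.inr ⟨h, hxS⟩))
  refine ⟨?_, ?_, ?_, ?_, ?_, ?_⟩
  -- card
  · have hpair : ({i, i+1} : Finset ℤ) ⊆ S := by
      intro x hx
      simp only [Finset.mem_insert, Finset.mem_singleton] at hx
      rcases hx with rfl | rfl <;> assumption
    have hc2 : 2 ≤ S.card := by
      have := Finset.card_le_card hpair
      rwa [Finset.card_insert_of_notMem (by simp), Finset.card_singleton] at this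
    have hi1e : i + 1 ∈ S.erase i := Finset.mem_erase.mpr ⟨by omega, hi1S⟩
    have hnm1 : e ∉ (S.erase i).erase (i+1) := by
      simp only [Finset.mem_erase]
      rintro ⟨-, -, h⟩; exact heS h
    have hnm2 : d ∉ insert e ((S.erase i).erase (i+1)) := by
      simp only [Finset.mem_insert, Finset.mem_erase]
      rintro (h | ⟨-, -, h⟩)
      · omega
      · exact hdS h
    rw [hTdef]
    rw [Finset.card_insert_of_notMem hnm2, Finset.card_insert_of_notMem hnm1,
      Finset.card_erase_of_mem hi1e, Finset.card_erase_of_mem hiS]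
    have := hs.hcard
    omega
  -- exLow
  · obtain ⟨x, hxS, hx0⟩ := hs.exLow
    by_cases hx : x = i ∨ x = i + 1
    · exact ⟨d, hdT, by omega⟩
    · push_neg at hx
      exact ⟨x, (memT x).mpr (Or.inr (Or.inr ⟨hxS, hx.1, hx.2⟩)), hx0⟩
  -- exHigh
  · obtain ⟨x, hxS, hx0⟩ := hs.exHigh
    by_cases hx : x = i ∨ x = i + 1
    · exact ⟨e, heT, by omega⟩
    · push_neg at hx
      exact ⟨x, (memT x).mpr (Or.inr (Or.inr ⟨hxS, hx.1, hx.2⟩)), hx0⟩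
  -- i1
  · intro u huT v hvT huv
    rcases classify u huT with ⟨hu1, huS⟩ | ⟨hu1, hu2⟩ | ⟨hu1, hu2⟩ | ⟨hu1, huS⟩ <;>
      rcases classify v hvT with ⟨hv1, hvS⟩ | ⟨hv1, hv2⟩ | ⟨hv1, hv2⟩ | ⟨hv1, hvS⟩
    -- aa
    · rw [cnt_congr (fun x h1 h2 => hagree x (by omega))]
      exact hs.i1 u huS v hvS huv
    -- ab
    · have e1 : cnt T u v = cnt T u (d-1) + cnt T d v :=
        cnt_split' T (by omega) (by omega) (by ring)
      have e2 : cnt T u (d-1) = cnt S u (d-1) :=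
        cnt_congr (fun x h1 h2 => hagree x (by omega))
      have e3 : cnt T d v = v - d + 1 := cTL d v le_rfl (by omega) hv2
      have := haux1 u huS (by omega)
      linarith
    -- ac
    · have e1 : cnt T u v = cnt T u (d-1) + cnt T d v :=
        cnt_split' T (by omega) (by omega) (by ring)
      have e2 : cnt T u (d-1) = cnt S u (d-1) :=
        cnt_congr (fun x h1 h2 => hagree x (by omega))
      have e3 : cnt T d v = v - d - 1 := cTwin d v le_rfl hdi hv1 hv2
      have := haux1 u huS (by omega)
      linarith
    -- ad
    · rw [cntTS_outer u v (by omega) (by omega)]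
      exact hs.i1 u huS v hvS huv
    -- ba (impossible)
    · exfalso; omega
    -- bb
    · have e1 : cnt T u v = v - u + 1 := cTL u v hu1 huv hv2
      linarith
    -- bc
    · have e1 : cnt T u v = v - u - 1 := cTwin u v hu1 hu2 hv1 hv2
      linarith
    -- bd
    · have e1 : cnt T u v = cnt T u e + cnt T (e+1) v :=
        cnt_split' T (by omega) (by omega) rfl
      have e2 : cnt T u e = e - u - 1 := cTwin u e hu1 hu2 hie le_rfl
      have e3 : cnt T (e+1) v = cnt S (e+1) v :=
        cnt_congr (fun x h1 h2 => hagree x (by omega))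
      have := haux2 v hvS (by omega)
      linarith
    -- ca (impossible)
    · exfalso; omega
    -- cb (impossible)
    · exfalso; omega
    -- cc
    · have e1 : cnt T u v = v - u + 1 := cTR u v hu1 huv hv2
      linarith
    -- cd
    · have e1 : cnt T u v = cnt T u e + cnt T (e+1) v :=
        cnt_split' T (by omega) (by omega) rfl
      have e2 : cnt T u e = e - u + 1 := cTR u e hu1 hu2 le_rfl
      have e3 : cnt T (e+1) v = cnt S (e+1) v :=
        cnt_congr (fun x h1 h2 => hagree x (by omega))
      have := haux2 v hvS (by omega)
      linarith
    -- da (impossible)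
    · exfalso; omega
    -- db (impossible)
    · exfalso; omega
    -- dc (impossible)
    · exfalso; omega
    -- dd
    · rw [cnt_congr (fun x h1 h2 => hagree x (by omega))]
      exact hs.i1 u huS v hvS huv
  -- i2
  · intro hpos v hvT
    have hposS : ∀ x ∈ S, (0:ℤ) ≤ x := by
      intro x hxS
      by_cases hx : x = i ∨ x = i + 1
      · have := hpos d hdT; omega
      · push_neg at hx
        exact hpos x ((memT x).mpr (Or.inr (Or.inr ⟨hxS, hx.1, hx.2⟩)))
    have h0S : (0:ℤ) ∈ S := by
      obtain ⟨x, hxS, hx0⟩ := hs.exLow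
      have := hposS x hxS
      rwa [show (0:ℤ) = x by omega]
    have hd1 : 1 ≤ d := by
      have h0 := hpos d hdT
      by_cases hd0 : d = 0
      · rw [hd0] at hdS; exact absurd h0S hdS
      · omega
    have haux3 : d + 1 ≤ 2 * cnt S 0 (d-1) := by
      have h := hs.i2 hposS (d+1) hd1S
      rw [cS_d 0 (by omega)] at h
      linarith
    rcases classify v hvT with ⟨hv1, hvS⟩ | ⟨hv1, hv2⟩ | ⟨hv1, hv2⟩ | ⟨hv1, hvS⟩
    · rw [cnt_congr (fun x h1 h2 => hagree x (by omega))]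
      exact hs.i2 hposS v hvS
    · have e1 : cnt T 0 v = cnt T 0 (d-1) + cnt T d v :=
        cnt_split' T (by omega) (by omega) (by ring)
      have e2 : cnt T 0 (d-1) = cnt S 0 (d-1) :=
        cnt_congr (fun x h1 h2 => hagree x (by omega))
      have e3 : cnt T d v = v - d + 1 := cTL d v le_rfl (by omega) hv2
      linarith
    · have e1 : cnt T 0 v = cnt T 0 (d-1) + cnt T d v :=
        cnt_split' T (by omega) (by omega) (by ring)
      have e2 : cnt T 0 (d-1) = cnt S 0 (d-1) :=
        cnt_congr (fun x h1 h2 => hagree x (by omega))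
      have e3 : cnt T d v = v - d - 1 := cTwin d v le_rfl hdi hv1 hv2
      linarith
    · rw [cntTS_outer 0 v (by omega) (by omega)]
      exact hs.i2 hposS v hvS
  -- i3
  · intro hub u huT
    have hubS : ∀ x ∈ S, x ≤ (N:ℤ) - 1 := by
      intro x hxS
      by_cases hx : x = i ∨ x = i + 1
      · have := hub e heT; omega
      · push_neg at hx
        exact hub x ((memT x).mpr (Or.inr (Or.inr ⟨hxS, hx.1, hx.2⟩)))
    have hN1S : (N:ℤ) - 1 ∈ S := by
      obtain ⟨x, hxS, hx0⟩ := hs.exHigh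
      have := hubS x hxS
      rwa [show (N:ℤ) - 1 = x by omega]
    have heN : e ≤ (N:ℤ) - 2 := by
      have h1 := hub e heT
      by_cases he' : e = (N:ℤ) - 1
      · rw [he'] at heS; exact absurd hN1S heS
      · omega
    have haux4 : (N:ℤ) - e ≤ 2 * cnt S (e+1) ((N:ℤ)-1) := by
      have h := hs.i3 hubS (e-1) he1S
      rw [cS_e ((N:ℤ)-1) (by omega)] at h
      linarith
    rcases classify u huT with ⟨hu1, huS⟩ | ⟨hu1, hu2⟩ | ⟨hu1, hu2⟩ | ⟨hu1, huS⟩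
    · rw [cntTS_outer u ((N:ℤ)-1) (by omega) (by omega)]
      exact hs.i3 hubS u huS
    · have e1 : cnt T u ((N:ℤ)-1) = cnt T u e + cnt T (e+1) ((N:ℤ)-1) :=
        cnt_split' T (by omega) (by omega) rfl
      have e2 : cnt T u e = e - u - 1 := cTwin u e hu1 hu2 hie le_rfl
      have e3 : cnt T (e+1) ((N:ℤ)-1) = cnt S (e+1) ((N:ℤ)-1) :=
        cnt_congr (fun x h1 h2 => hagree x (by omega))
      linarith
    · have e1 : cnt T u ((N:ℤ)-1) = cnt T u e + cnt T (e+1) ((N:ℤ)-1) :=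
        cnt_split' T (by omega) (by omega) rfl
      have e2 : cnt T u e = e - u + 1 := cTR u e hu1 hu2 le_rfl
      have e3 : cnt T (e+1) ((N:ℤ)-1) = cnt S (e+1) ((N:ℤ)-1) :=
        cnt_congr (fun x h1 h2 => hagree x (by omega))
      linarith
    · rw [cnt_congr (fun x h1 h2 => hagree x (by omega))]
      exact hs.i3 hubS u huS
/-- Starting from the flat clusteron occupying rooms `0,…,N-1`, in any reachable state
no violinist is left of room `-(N-1)` or right of room `2N-2`. -/
theorem flat_clusteron_position_bound (N : ℕ) (hN : 1 ≤ N) (S : Finset ℤ)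
    (h : FReaches (Finset.Icc (0 : ℤ) ((N : ℤ) - 1)) S) :
    ∀ x ∈ S, -((N : ℤ) - 1) ≤ x ∧ x ≤ 2 * (N : ℤ) - 2 := by
  have key : FInv N S := by
    induction h with
    | refl => exact finv_init N hN
    | tail _ hbc ih => exact finv_move hbc ih
  intro x hx
  have hcard := key.hcard
  constructor
  · by_cases hall : ∀ y ∈ S, y ≤ (N:ℤ) - 1
    · have h1 := key.i3 hall x hx
      have h2 := cnt_le_card S x ((N:ℤ) - 1)
      omega
    · push_neg at hall
      obtain ⟨M, hMS, hM⟩ := hall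
      rcases le_or_gt x M with h' | h'
      · have h1 := key.i1 x hx M hMS h'
        have h2 := cnt_le_card S x M
        omega
      · omega
  · by_cases hall : ∀ y ∈ S, (0:ℤ) ≤ y
    · have h1 := key.i2 hall x hx
      have h2 := cnt_le_card S 0 x
      omega
    · push_neg at hall
      obtain ⟨m, hmS, hm⟩ := hall
      rcases le_or_gt m x with h' | h'
      · have h1 := key.i1 m hmS x hx h'
        have h2 := cnt_le_card S m x
        omega
      · omega
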